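/- Let N be a set partitioned as N = N₀ ∪ N₁ (disjoint), let φ₀ : 𝒫(N₀) → 𝒫(N₀) and φ₁ : 𝒫(N₁) → 𝒫(N₁) be monotone, let ∇ : 𝒫(N₀) → 𝒫(N₁) be a monotone map with ∇(X) = N₁ whenever X = N₀, and define ψ : 𝒫(N) → 𝒫(N) by ψ(X) = φ₀(X ∩ N₀) ∪ (φ₁(X ∩ N₁) ∩ ∇(X ∩ N₀)). Suppose φ₀^α(∅) = N₀. Then ψ^δ(∅) ∩ N₀ = φ₀^δ(∅) for every ordinal δ, and φ₁^γ(∅) ⊆ ψ^{α+γ}(∅) ∩ N₁ for every ordinal γ. Consequently, if moreover φ₁^β(∅) = N₁, then ψ^{α+β}(∅) = N. -/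

import Mathlib

open Set

universe u v
/-- Ordinal-indexed iterates of a map on a powerset, starting from ∅,
taking unions at limit stages. -/
noncomputable def iter {A : Type u} (f : Set A → Set A) (o : Ordinal.{v}) : Set A :=
  Ordinal.limitRecOn o ∅ (fun _ ih => f ih)
    (fun o _ ih => ⋃ (b : Ordinal.{v}) (h : b < o), ih b h)

theorem iter_zero {A : Type u} (f : Set A → Set A) : iter f (0 : Ordinal.{v}) = ∅ :=
  Ordinal.limitRecOn_zero ..

theorem iter_succ {A : Type u} (f : Set A → Set A) (o : Ordinal.{v}) :
    iter f (Order.succ o) = f (iter f o) :=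
  Ordinal.limitRecOn_succ ..

theorem iter_limit {A : Type u} (f : Set A → Set A) {o : Ordinal.{v}} (ho : Order.IsSuccLimit o) :
    iter f o = ⋃ (b : Ordinal.{v}) (_ : b < o), iter f b :=
  Ordinal.limitRecOn_limit _ _ _ _ ho

theorem iter_le_apply {A : Type u} {f : Set A → Set A} (hf : Monotone f) :
    ∀ o : Ordinal.{v}, iter f o ⊆ f (iter f o) := by
  intro o
  induction o using Ordinal.limitRecOn with
  | zero => rw [iter_zero]; exact empty_subset _
  | add_one o ih => rw [Ordinal.add_one_eq_succ, iter_succ]; exact hf ih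
  | limit o ho ih =>
      rw [iter_limit f ho]
      refine iUnion₂_subset fun b hb => ?_
      exact (ih b hb).trans (hf (subset_iUnion₂ (s := fun b' (_ : b' < o) => iter f b') b hb))

theorem iter_mono_ord {A : Type u} {f : Set A → Set A} (hf : Monotone f)
    {b c : Ordinal.{v}} (hbc : b ≤ c) : iter f b ⊆ iter f c := by
  induction c using Ordinal.limitRecOn with
  | zero => rw [nonpos_iff_eq_zero.1 hbc]
  | add_one c ih =>
      rw [Ordinal.add_one_eq_succ] at hbc ⊢
      rcases Order.le_succ_iff_eq_or_le.1 hbc with h | h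
      · rw [h]
      · exact (ih h).trans (by rw [iter_succ]; exact iter_le_apply hf c)
  | limit c hc ih =>
      rcases eq_or_lt_of_le hbc with h | h
      · rw [h]
      · rw [iter_limit f hc]
        exact subset_iUnion₂ (s := fun b' (_ : b' < c) => iter f b') b h

theorem iter_subset {A : Type u} {f : Set A → Set A} {T : Set A}
    (hT : ∀ S, f S ⊆ T) : ∀ o : Ordinal.{v}, iter f o ⊆ T := by
  intro o
  induction o using Ordinal.limitRecOn with
  | zero => rw [iter_zero]; exact empty_subset _
  | add_one o ih => rw [Ordinal.add_one_eq_succ, iter_succ]; exact hT _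
  | limit o ho ih => rw [iter_limit f ho]; exact iUnion₂_subset ih
theorem stmt17 {N : Type u} (N₀ N₁ : Set N) (hdis : Disjoint N₀ N₁)
    (hun : N₀ ∪ N₁ = Set.univ)
    (φ₀ φ₁ nab : Set N → Set N)
    (h0 : Monotone φ₀) (h1 : Monotone φ₁) (hd : Monotone nab)
    (hr0 : ∀ S, φ₀ S ⊆ N₀) (hr1 : ∀ S, φ₁ S ⊆ N₁) (hrd : ∀ S, nab S ⊆ N₁)
    (hdN : nab N₀ = N₁)
    (ψ : Set N → Set N)
    (hψ : ∀ X, ψ X = φ₀ (X ∩ N₀) ∪ (φ₁ (X ∩ N₁) ∩ nab (X ∩ N₀)))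
    (α : Ordinal.{v}) (hα : iter φ₀ α = N₀) :
    (∀ δ : Ordinal.{v}, iter ψ δ ∩ N₀ = iter φ₀ δ) ∧
      (∀ γ : Ordinal.{v}, iter φ₁ γ ⊆ iter ψ (α + γ) ∩ N₁) ∧
      (∀ β : Ordinal.{v}, iter φ₁ β = N₁ → iter ψ (α + β) = Set.univ) := by
  have hψmono : Monotone ψ := by
    intro X Y hXY
    rw [hψ, hψ]
    exact union_subset_union (h0 (inter_subset_inter_left _ hXY))
      (inter_subset_inter (h1 (inter_subset_inter_left _ hXY))
        (hd (inter_subset_inter_left _ hXY)))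
  have partA : ∀ δ : Ordinal.{v}, iter ψ δ ∩ N₀ = iter φ₀ δ := by
    intro δ
    induction δ using Ordinal.limitRecOn with
    | zero => rw [iter_zero, iter_zero, empty_inter]
    | add_one δ ih =>
        rw [Ordinal.add_one_eq_succ, iter_succ, iter_succ, hψ, union_inter_distrib_right, ih,
          inter_eq_left.2 (hr0 _)]
        have hempty : (φ₁ (iter ψ δ ∩ N₁) ∩ nab (iter φ₀ δ)) ∩ N₀ = ∅ := by
          apply eq_empty_of_subset_empty
          rw [← hdis.inter_eq]
          exact inter_subset_inter_left _ ((inter_subset_left).trans (hr1 _)) |>.trans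
            (inter_comm N₁ N₀ ▸ Subset.rfl)
        rw [hempty, union_empty]
    | limit δ hδ ih =>
        rw [iter_limit ψ hδ, iter_limit φ₀ hδ, iUnion₂_inter]
        exact iUnion₂_congr ih
  have hφ₀N₀ : ∀ o : Ordinal.{v}, iter φ₀ o ⊆ N₀ := iter_subset hr0
  have hφ₀full : ∀ o : Ordinal.{v}, α ≤ o → iter φ₀ o = N₀ := fun o ho =>
    subset_antisymm (hφ₀N₀ o) (hα ▸ iter_mono_ord h0 ho)
  have partB : ∀ γ : Ordinal.{v}, iter φ₁ γ ⊆ iter ψ (α + γ) ∩ N₁ := by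
    intro γ
    induction γ using Ordinal.limitRecOn with
    | zero => rw [iter_zero]; exact empty_subset _
    | add_one γ ih =>
        rw [Ordinal.add_one_eq_succ, Ordinal.add_succ, iter_succ, iter_succ]
        refine subset_inter ?_ (hr1 _)
        rw [hψ]
        refine subset_union_of_subset_right (subset_inter ?_ ?_) _
        · exact h1 (subset_inter (ih.trans inter_subset_left)
            (iter_subset hr1 _))
        · rw [partA, hφ₀full _ (CanonicallyOrderedAdd.le_self_add α γ), hdN]
          exact hr1 _
    | limit γ hγ ih =>
        rw [iter_limit φ₁ hγ]
        refine iUnion₂_subset fun b hb => (ih b hb).trans ?_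
        exact inter_subset_inter_left _
          (iter_mono_ord hψmono (add_le_add_right hb.le α))
  refine ⟨partA, partB, fun β hβ => ?_⟩
  rw [← univ_subset_iff, ← hun]
  refine union_subset ?_ ?_
  · rw [← hφ₀full (α + β) (CanonicallyOrderedAdd.le_self_add α β), ← partA]
    exact inter_subset_left
  · exact (hβ ▸ partB β).trans inter_subset_left
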